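/- Let Λ be a topological space, X and Y compact metric spaces, and let φ : ℝ≥0 × X × Λ → X and ψ : ℝ≥0 × Y × Λ → Y be parametrized dynamical systems over Λ. Suppose h : Λ × X → Y is a conjugacy between them: h is continuous; for each λ ∈ Λ, h^λ = h(λ,·) : X → Y is a homeomorphism and there is a continuous reparametrization τ^λ : ℝ≥0 × X → ℝ≥0 with τ^λ(0,x) = 0, t ↦ τ^λ(t,x) strictly increasing and bijective onto ℝ≥0 for each x, and h^λ(φ^λ(t,x)) = ψ^λ(τ^λ(t,x), h^λ(x)) for all t, x; and for every connected component X_i of X there is a connected component Y_i of Y with h^λ(X_i) = Y_i for all λ ∈ Λ simultaneously. Then the map (λ, A) ↦ (λ, h^λ(A)) is a homeomorphism from the attractor étalé space of φ over Λ onto the attractor étalé space of ψ over Λ. -/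

import Mathlib

open Set Topology NNReal TopologicalSpace Metric

/-- The ω-limit set of `U` under a dynamical system `θ`. -/
def omegaLim {X : Type*} [TopologicalSpace X] (θ : ℝ≥0 × X → X) (U : Set X) : Set X :=
  ⋂ t : ℝ≥0, closure (⋃ s : ℝ≥0, ⋃ _ : t ≤ s, (fun x => θ (s, x)) '' U)

/-- The sliceDS `φ^λ` of a parametrized system `φ : ℝ≥0 × X × Λ → X`. -/
def sliceDS {X Λ : Type*} (φ : ℝ≥0 × X × Λ → X) (l : Λ) : ℝ≥0 × X → X :=
  fun p => φ (p.1, p.2, l)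

/-- A parametrized dynamical system over `Λ` on `X` with time `ℝ≥0`. -/
def IsParamDS {X Λ : Type*} [TopologicalSpace X] [TopologicalSpace Λ]
    (φ : ℝ≥0 × X × Λ → X) : Prop :=
  Continuous φ ∧ ∀ l : Λ, (∀ x, sliceDS φ l (0, x) = x) ∧
    ∀ t s x, sliceDS φ l (t, sliceDS φ l (s, x)) = sliceDS φ l (t + s, x)

/-- The attracting neighborhoods of the sliceDS `φ^λ`. -/
def attNbhd {X Λ : Type*} [TopologicalSpace X] (φ : ℝ≥0 × X × Λ → X) (l : Λ) :
    Set (Set X) :=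
  {U : Set X | omegaLim (sliceDS φ l) U ⊆ interior U}

/-- The attractor étalé space of `φ` over `Λ`: pairs `(λ, A)` with `A` an attractor of
`φ^λ`, i.e. `A = ω_{φ^λ}(U)` for some attracting neighborhood `U`. -/
def AttEtale {X Λ : Type*} [TopologicalSpace X] (φ : ℝ≥0 × X × Λ → X) : Type _ :=
  {p : Λ × Set X // p.2 ∈ (fun U => omegaLim (sliceDS φ p.1) U) '' attNbhd φ p.1}

/-- The étalé topology on the attractor étalé space: generated by the sets
`{(λ, ω_{φ^λ}(U)) : λ ∈ Ω}` for `U ⊆ X` and `Ω` open in `Λ` contained in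
`{λ : U is an attracting neighborhood of φ^λ}`. -/
def attEtaleTop {X Λ : Type*} [TopologicalSpace X] [TopologicalSpace Λ]
    (φ : ℝ≥0 × X × Λ → X) : TopologicalSpace (AttEtale φ) :=
  TopologicalSpace.generateFrom
    {V : Set (AttEtale φ) | ∃ (U : Set X) (Ω : Set Λ), IsOpen Ω ∧
      Ω ⊆ {l : Λ | U ∈ attNbhd φ l} ∧
      V = {p : AttEtale φ | p.1.1 ∈ Ω ∧ p.1.2 = omegaLim (sliceDS φ p.1.1) U}}

/-! ### Auxiliary material -/

/-- The tail set of the orbit of `U` from time `t` on. -/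
def tailSet {X : Type*} (θ : ℝ≥0 × X → X) (U : Set X) (t : ℝ≥0) : Set X :=
  ⋃ s : ℝ≥0, ⋃ _ : t ≤ s, (fun x => θ (s, x)) '' U

lemma omegaLim_def {X : Type*} [TopologicalSpace X] (θ : ℝ≥0 × X → X) (U : Set X) :
    omegaLim θ U = ⋂ t : ℝ≥0, closure (tailSet θ U t) := rfl

lemma mem_tailSet {X : Type*} {θ : ℝ≥0 × X → X} {U : Set X} {t : ℝ≥0} {y : X} :
    y ∈ tailSet θ U t ↔ ∃ s, t ≤ s ∧ ∃ x ∈ U, θ (s, x) = y := by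
  simp [tailSet]

lemma tailSet_mono_left {X : Type*} {θ : ℝ≥0 × X → X} {U : Set X} {t t' : ℝ≥0} (h : t ≤ t') :
    tailSet θ U t' ⊆ tailSet θ U t := by
  intro y hy
  rw [mem_tailSet] at hy ⊢
  obtain ⟨s, hs, hx⟩ := hy
  exact ⟨s, h.trans hs, hx⟩

lemma tailSet_mono_right {X : Type*} {θ : ℝ≥0 × X → X} {U V : Set X} {t : ℝ≥0} (h : U ⊆ V) :
    tailSet θ U t ⊆ tailSet θ V t := by
  intro y hy
  rw [mem_tailSet] at hy ⊢
  obtain ⟨s, hs, x, hx, hxy⟩ := hy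
  exact ⟨s, hs, x, h hx, hxy⟩

lemma omegaLim_mono {X : Type*} [TopologicalSpace X] {θ : ℝ≥0 × X → X} {U V : Set X}
    (h : U ⊆ V) : omegaLim θ U ⊆ omegaLim θ V :=
  iInter_mono fun _ => closure_mono (tailSet_mono_right h)

/-- If `C ⊆ W` and the time-`T` map sends `W` into `C`, then `W` and `C` have the same
ω-limit set. -/
lemma omegaLim_eq_of_absorb {X : Type*} [TopologicalSpace X] {θ : ℝ≥0 × X → X}
    (hsg : ∀ t s x, θ (t, θ (s, x)) = θ (t + s, x))
    {C W : Set X} {T : ℝ≥0} (hCW : C ⊆ W) (habs : ∀ x ∈ W, θ (T, x) ∈ C) :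
    omegaLim θ W = omegaLim θ C := by
  refine subset_antisymm ?_ (omegaLim_mono hCW)
  intro y hy
  simp only [omegaLim_def, mem_iInter] at hy ⊢
  intro t
  refine closure_mono ?_ (hy (t + T))
  intro z hz
  rw [mem_tailSet] at hz ⊢
  obtain ⟨s, hs, x, hx, rfl⟩ := hz
  have hTs : T ≤ s := le_trans (le_add_self) hs
  refine ⟨s - T, ?_, θ (T, x), habs x hx, ?_⟩
  · rwa [le_tsub_iff_right hTs]
  · rw [hsg, tsub_add_cancel_of_le hTs]

lemma omegaLim_subset_of_tail_subset {X : Type*} [TopologicalSpace X] {θ : ℝ≥0 × X → X}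
    {U C : Set X} {T : ℝ≥0} (hC : IsClosed C) (h : tailSet θ U T ⊆ C) :
    omegaLim θ U ⊆ C :=
  (iInter_subset _ T).trans (by rw [← hC.closure_eq]; exact closure_mono h)

/-- Dini-type lemma: a continuous reparametrization diverges uniformly on a compact space. -/
lemma dini_unif {X : Type*} [TopologicalSpace X] [CompactSpace X] {τ : ℝ≥0 × X → ℝ≥0}
    (hc : Continuous τ) (hm : ∀ x, StrictMono fun t => τ (t, x))
    (hs : ∀ x, Function.Surjective fun t => τ (t, x)) (r : ℝ≥0) :
    ∃ t : ℝ≥0, ∀ x : X, r ≤ τ (t, x) := by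
  have hch : ∀ x : X, ∃ tx : ℝ≥0, τ (tx, x) = r + 1 := fun x => hs x (r + 1)
  choose tx htx using hch
  have hcov : univ ⊆ ⋃ x : X, {x' : X | r < τ (tx x, x')} := by
    intro x _
    exact mem_iUnion.2 ⟨x, by simp [htx x, lt_add_of_pos_right r one_pos]⟩
  obtain ⟨F, hF⟩ := isCompact_univ.elim_finite_subcover
    (fun x : X => {x' : X | r < τ (tx x, x')})
    (fun x => isOpen_lt continuous_const ((hc.comp (by continuity)))) hcov
  refine ⟨F.sup tx, fun x => ?_⟩
  obtain ⟨i, hiF, hi⟩ := mem_iUnion₂.1 (hF (mem_univ x))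
  calc r ≤ τ (tx i, x) := le_of_lt hi
    _ ≤ τ (F.sup tx, x) := (hm x).monotone (Finset.le_sup hiF)

/-- Transport of ω-limit sets through a conjugating homeomorphism with time
reparametrization. -/
lemma omega_transport {X Y : Type*} [TopologicalSpace X] [CompactSpace X] [TopologicalSpace Y]
    {θ : ℝ≥0 × X → X} {η : ℝ≥0 × Y → Y} {g : X → Y} (hg : IsHomeomorph g)
    {τ : ℝ≥0 × X → ℝ≥0} (hτc : Continuous τ) (hτm : ∀ x, StrictMono fun t => τ (t, x))
    (hτs : ∀ x, Function.Surjective fun t => τ (t, x))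
    (hconj : ∀ t x, g (θ (t, x)) = η (τ (t, x), g x)) (U : Set X) :
    g '' omegaLim θ U = omegaLim η (g '' U) := by
  obtain ⟨e, he⟩ := isHomeomorph_iff_exists_homeomorph.1 hg
  have key1 : ∀ r : ℝ≥0, ∃ t : ℝ≥0, g '' tailSet θ U t ⊆ tailSet η (g '' U) r := by
    intro r
    obtain ⟨t, ht⟩ := dini_unif hτc hτm hτs r
    refine ⟨t, ?_⟩
    rintro y ⟨z, hz, rfl⟩
    rw [mem_tailSet] at hz
    obtain ⟨s, hs, x, hx, rfl⟩ := hz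
    rw [mem_tailSet]
    exact ⟨τ (s, x), (ht x).trans ((hτm x).monotone hs), g x, mem_image_of_mem g hx,
      (hconj s x).symm⟩
  have key2 : ∀ t : ℝ≥0, ∃ r : ℝ≥0, tailSet η (g '' U) r ⊆ g '' tailSet θ U t := by
    intro t
    have hcpt : IsCompact ((fun x => τ (t, x)) '' univ) :=
      isCompact_univ.image (hτc.comp (Continuous.prodMk_right t))
    obtain ⟨r, hr⟩ := hcpt.bddAbove
    refine ⟨r, ?_⟩
    intro y hy
    rw [mem_tailSet] at hy
    obtain ⟨s, hs, yy, ⟨x, hx, rfl⟩, rfl⟩ := hy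
    obtain ⟨s', hs'⟩ := hτs x s
    simp only at hs'
    have hts' : t ≤ s' := by
      by_contra hc'
      push_neg at hc'
      have h1 : τ (s', x) < τ (t, x) := hτm x hc'
      have h2 : τ (t, x) ≤ r := hr (mem_image_of_mem _ (mem_univ x))
      rw [hs'] at h1
      exact absurd hs (not_le.2 (lt_of_lt_of_le h1 h2))
    refine ⟨θ (s', x), mem_tailSet.2 ⟨s', hts', x, hx, rfl⟩, ?_⟩
    rw [hconj s' x, hs']
  have him : ∀ t, g '' closure (tailSet θ U t) = closure (g '' tailSet θ U t) := by
    intro t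
    rw [← he]
    exact (Homeomorph.image_closure e _)
  calc g '' omegaLim θ U = ⋂ t, g '' closure (tailSet θ U t) :=
        image_iInter hg.bijective _
    _ = ⋂ t, closure (g '' tailSet θ U t) := by simp only [him]
    _ = ⋂ r, closure (tailSet η (g '' U) r) := by
        apply subset_antisymm
        · intro y hy
          rw [mem_iInter] at hy ⊢
          intro r
          obtain ⟨t, ht⟩ := key1 r
          exact closure_mono ht (hy t)
        · intro y hy
          rw [mem_iInter] at hy ⊢
          intro t
          obtain ⟨r, hr⟩ := key2 t
          exact closure_mono hr (hy r)
    _ = omegaLim η (g '' U) := rfl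

/-- Robustness of attracting neighborhoods under small perturbations of the neighborhood
and of the parameter. -/
lemma persist {Λ Y : Type*} [TopologicalSpace Λ] [MetricSpace Y] [CompactSpace Y]
    {ψ : ℝ≥0 × Y × Λ → Y} (hψ : IsParamDS ψ) (l₀ : Λ) (U : Set Y)
    (hU : omegaLim (sliceDS ψ l₀) U ⊆ interior U) :
    ∃ (Ω₁ : Set Λ) (ε : ℝ), IsOpen Ω₁ ∧ l₀ ∈ Ω₁ ∧ 0 < ε ∧
      ∀ l ∈ Ω₁, ∀ g : Y → Y, IsHomeomorph g → (∀ y, dist (g y) y ≤ ε) →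
        omegaLim (sliceDS ψ l) (g '' U) = omegaLim (sliceDS ψ l) U ∧
        omegaLim (sliceDS ψ l) (g '' U) ⊆ interior (g '' U) ∧
        omegaLim (sliceDS ψ l) U ⊆ interior U := by
  obtain ⟨hψc, hψax⟩ := hψ
  have hslc : ∀ l : Λ, Continuous (sliceDS ψ l) := fun l =>
    hψc.comp (continuous_fst.prodMk (continuous_snd.prodMk continuous_const))
  set θ₀ := sliceDS ψ l₀ with hθ₀
  have hU' : (⋂ t : ℝ≥0, closure (tailSet θ₀ U t)) ⊆ interior U := hU
  have hscpt : IsCompact ((interior U)ᶜ) := (isOpen_interior.isClosed_compl).isCompact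
  obtain ⟨u, hu⟩ := hscpt.elim_finite_subfamily_closed
    (fun t : ℝ≥0 => closure (tailSet θ₀ U t)) (fun _ => isClosed_closure)
    (eq_empty_iff_forall_notMem.2 fun z hz => hz.1 (hU' hz.2))
  set T : ℝ≥0 := max (u.sup id) 1 with hTdef
  have hT1 : (1 : ℝ≥0) ≤ T := le_max_right _ _
  have hT : closure (tailSet θ₀ U T) ⊆ interior U := by
    intro z hz
    by_contra hz'
    have hmem : z ∈ (interior U)ᶜ ∩ ⋂ i ∈ u, closure (tailSet θ₀ U i) := by
      refine ⟨hz', mem_iInter₂.2 fun i hi => ?_⟩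
      exact closure_mono (tailSet_mono_left ((Finset.le_sup (f := id) hi).trans (le_max_left _ _))) hz
    rw [hu] at hmem
    exact hmem
  set F : ℝ≥0 × Y → Y := θ₀ with hFdef
  have hFc : Continuous F := hslc l₀
  have himg : ∀ p ∈ Icc T (2 * T) ×ˢ closure U, F p ∈ interior U := by
    intro p hp
    apply hT
    have h1 : Icc T (2 * T) ×ˢ closure U = closure (Icc T (2 * T) ×ˢ U) := by
      rw [closure_prod_eq, closure_Icc]
    rw [h1] at hp
    refine closure_mono ?_ (image_closure_subset_closure_image hFc (mem_image_of_mem F hp))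
    rintro y ⟨⟨s, x⟩, ⟨hs, hx⟩, rfl⟩
    exact mem_tailSet.2 ⟨s, hs.1, x, hx, rfl⟩
  have hKc : IsCompact (Icc T (2 * T) ×ˢ closure U) :=
    isCompact_Icc.prod isClosed_closure.isCompact
  obtain ⟨δ₁, hδ₁pos, hδ₁⟩ := hKc.exists_cthickening_subset_open
    (isOpen_interior.preimage hFc) (fun p hp => himg p hp)
  set Vb : Set Y := cthickening δ₁ (closure U) with hVbdef
  have hVbc : IsCompact Vb := isClosed_cthickening.isCompact
  have hUVb : U ⊆ Vb := subset_closure.trans (self_subset_cthickening _)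
  have hKV : ∀ p ∈ Icc T (2 * T) ×ˢ Vb, F p ∈ interior U := by
    rintro ⟨s, x⟩ ⟨hs, hx⟩
    apply hδ₁
    rw [mem_cthickening_iff] at hx ⊢
    refine le_trans ?_ hx
    rw [Metric.infEDist]
    refine le_iInf₂ fun x' hx' => ?_
    refine le_trans (EMetric.infEdist_le_edist_of_mem
      (show ((s, x') : ℝ≥0 × Y) ∈ _ from ⟨hs, hx'⟩)) ?_
    simp [Prod.edist_eq, edist_self]
  set C₁ : Set Y := F '' (Icc T (2 * T) ×ˢ Vb) with hC₁def
  have hC₁c : IsCompact C₁ := (isCompact_Icc.prod hVbc).image hFc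
  have hC₁int : C₁ ⊆ interior U := by rintro y ⟨p, hp, rfl⟩; exact hKV p hp
  obtain ⟨δ₂, hδ₂pos, hδ₂⟩ := hC₁c.exists_cthickening_subset_open isOpen_interior hC₁int
  set C : Set Y := cthickening δ₂ C₁ with hCdef
  have hCcl : IsClosed C := isClosed_cthickening
  have hCint : C ⊆ interior U := hδ₂
  have hCVb : C ⊆ Vb := hCint.trans (interior_subset.trans hUVb)
  obtain ⟨ε₀, hε₀pos, hε₀⟩ := (hCcl.isCompact).exists_cthickening_subset_open isOpen_interior hCint
  set ε : ℝ := min δ₁ ε₀ with hεdef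
  have hεpos : 0 < ε := lt_min hδ₁pos hε₀pos
  have hev : ∀ᶠ l in 𝓝 l₀, ∀ p ∈ Icc T (2 * T) ×ˢ Vb, dist (sliceDS ψ l p) (F p) < δ₂ := by
    apply (isCompact_Icc.prod hVbc).eventually_forall_of_forall_eventually
    intro p hp
    have hopen : IsOpen {q : Λ × (ℝ≥0 × Y) | dist (sliceDS ψ q.1 q.2) (F q.2) < δ₂} := by
      apply isOpen_lt _ continuous_const
      apply Continuous.dist
      · exact hψc.comp ((continuous_fst.comp continuous_snd).prodMk
          ((continuous_snd.comp continuous_snd).prodMk continuous_fst))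
      · exact hFc.comp continuous_snd
    have hmem : (l₀, p) ∈ {q : Λ × (ℝ≥0 × Y) | dist (sliceDS ψ q.1 q.2) (F q.2) < δ₂} := by
      simp only [mem_setOf_eq, hFdef, hθ₀, dist_self]
      show dist (sliceDS ψ l₀ p) (sliceDS ψ l₀ p) < δ₂
      rw [dist_self]
      exact hδ₂pos
    exact (hopen.eventually_mem hmem).mono fun q hq => hq
  obtain ⟨Ω₁, hΩ₁sub, hΩ₁open, hl₀Ω₁⟩ := mem_nhds_iff.1 hev
  refine ⟨Ω₁, ε, hΩ₁open, hl₀Ω₁, hεpos, ?_⟩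
  intro l hl g hg hgd
  have hldist : ∀ p ∈ Icc T (2 * T) ×ˢ Vb, dist (sliceDS ψ l p) (F p) < δ₂ := hΩ₁sub hl
  have hbase : ∀ s, T ≤ s → s ≤ 2 * T → ∀ x ∈ Vb, sliceDS ψ l (s, x) ∈ C := by
    intro s hs1 hs2 x hx
    have h1 := hldist (s, x) ⟨⟨hs1, hs2⟩, hx⟩
    exact mem_cthickening_of_dist_le _ _ _ _ (mem_image_of_mem F ⟨⟨hs1, hs2⟩, hx⟩) h1.le
  have hTle2T : T ≤ 2 * T := by
    rw [two_mul]; exact le_add_self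
  have habs : ∀ s, T ≤ s → ∀ x ∈ Vb, sliceDS ψ l (s, x) ∈ C := by
    have key : ∀ n : ℕ, ∀ s, T ≤ s → s ≤ 2 * T + n * T →
        ∀ x ∈ Vb, sliceDS ψ l (s, x) ∈ C := by
      intro n
      induction n with
      | zero => intro s hs1 hs2 x hx
                exact hbase s hs1 (by simpa using hs2) x hx
      | succ n ih =>
        intro s hs1 hs2 x hx
        by_cases hcase : s ≤ 2 * T
        · exact hbase s hs1 hcase x hx
        · push_neg at hcase
          have h2T : 2 * T ≤ s := hcase.le
          have hTs : T ≤ s := hs1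
          have hsplit : sliceDS ψ l (s, x) = sliceDS ψ l (s - T, sliceDS ψ l (T, x)) := by
            rw [(hψax l).2, tsub_add_cancel_of_le hTs]
          rw [hsplit]
          have hx' : sliceDS ψ l (T, x) ∈ Vb := hCVb (hbase T le_rfl hTle2T x hx)
          refine ih (s - T) ?_ ?_ _ hx'
          · rw [le_tsub_iff_right hTs, ← two_mul]; exact h2T
          · rw [tsub_le_iff_right]
            calc s ≤ 2 * T + (↑(n + 1)) * T := hs2
              _ = 2 * T + ↑n * T + T := by push_cast; ring
    intro s hs x hx
    obtain ⟨n, hn⟩ := exists_nat_ge s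
    refine key n s hs ?_ x hx
    calc s ≤ (n : ℝ≥0) := hn
      _ = n * 1 := by ring
      _ ≤ n * T := by exact mul_le_mul_of_nonneg_left hT1 zero_le'
      _ ≤ 2 * T + n * T := le_add_self
  have htail : ∀ (W : Set Y), W ⊆ Vb → tailSet (sliceDS ψ l) W T ⊆ C := by
    intro W hW y hy
    rw [mem_tailSet] at hy
    obtain ⟨s, hs, x, hx, rfl⟩ := hy
    exact habs s hs x (hW hx)
  obtain ⟨e, he⟩ := isHomeomorph_iff_exists_homeomorph.1 hg
  have hgUVb : g '' U ⊆ Vb := by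
    rintro y ⟨x, hx, rfl⟩
    exact mem_cthickening_of_dist_le _ _ _ _ (subset_closure hx)
      ((hgd x).trans (min_le_left _ _))
  have hCsub : ∀ z ∈ C, e.symm z ∈ interior U := by
    intro z hz
    apply hε₀
    have hgz : g (e.symm z) = z := by rw [← he]; exact e.apply_symm_apply z
    refine mem_cthickening_of_dist_le _ _ _ _ hz ?_
    calc dist (e.symm z) z = dist (g (e.symm z)) (e.symm z) := by rw [hgz, dist_comm]
      _ ≤ ε := hgd _
      _ ≤ ε₀ := min_le_right _ _
  have hCgU : C ⊆ g '' U := by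
    intro z hz
    refine ⟨e.symm z, interior_subset (hCsub z hz), ?_⟩
    rw [← he]; exact e.apply_symm_apply z
  have hCintgU : C ⊆ interior (g '' U) := by
    intro z hz
    apply hg.isOpenMap.image_interior_subset
    refine ⟨e.symm z, hCsub z hz, ?_⟩
    rw [← he]; exact e.apply_symm_apply z
  have hsg := (hψax l).2
  have hωU : omegaLim (sliceDS ψ l) U = omegaLim (sliceDS ψ l) C :=
    omegaLim_eq_of_absorb hsg (hCint.trans interior_subset)
      (fun x hx => hbase T le_rfl hTle2T x (hUVb hx))
  have hωgU : omegaLim (sliceDS ψ l) (g '' U) = omegaLim (sliceDS ψ l) C :=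
    omegaLim_eq_of_absorb hsg hCgU
      (fun x hx => hbase T le_rfl hTle2T x (hgUVb hx))
  have hωUC : omegaLim (sliceDS ψ l) U ⊆ C :=
    omegaLim_subset_of_tail_subset hCcl (htail U hUVb)
  refine ⟨hωgU.trans hωU.symm, ?_, hωUC.trans hCint⟩
  rw [hωgU, ← hωU]
  exact hωUC.trans hCintgU

/-- A set is open in the topology generated by `S` as soon as every point has a basic
neighborhood inside it. -/
lemma isOpen_generateFrom_of_forall {α : Type*} {S : Set (Set α)} {O : Set α}
    (h : ∀ p ∈ O, ∃ V ∈ S, p ∈ V ∧ V ⊆ O) : IsOpen[generateFrom S] O := by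
  have hO : O = ⋃₀ {V | V ∈ S ∧ V ⊆ O} := by
    apply subset_antisymm
    · intro p hp
      obtain ⟨V, hVS, hpV, hVO⟩ := h p hp
      exact ⟨V, ⟨hVS, hVO⟩, hpV⟩
    · exact sUnion_subset fun V hV => hV.2
  rw [hO]
  exact TopologicalSpace.GenerateOpen.sUnion _ fun V hV => TopologicalSpace.GenerateOpen.basic V hV.1

/-- Uniform closeness of the fibers of a continuous map on a compact space, near a
parameter value. -/
lemma h_uniform_close {Λ X Y : Type*} [TopologicalSpace Λ] [TopologicalSpace X]
    [CompactSpace X] [MetricSpace Y] {h : Λ × X → Y} (hhc : Continuous h) (l₀ : Λ)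
    {ε : ℝ} (hε : 0 < ε) :
    ∃ Ω₂ : Set Λ, IsOpen Ω₂ ∧ l₀ ∈ Ω₂ ∧ ∀ l ∈ Ω₂, ∀ x, dist (h (l, x)) (h (l₀, x)) ≤ ε := by
  have hev : ∀ᶠ l in 𝓝 l₀, ∀ x ∈ (univ : Set X), dist (h (l, x)) (h (l₀, x)) < ε := by
    apply isCompact_univ.eventually_forall_of_forall_eventually
    intro x _
    have hopen : IsOpen {q : Λ × X | dist (h q) (h (l₀, q.2)) < ε} := by
      apply isOpen_lt _ continuous_const
      exact hhc.dist (hhc.comp (continuous_const.prodMk continuous_snd))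
    have hmem : (l₀, x) ∈ {q : Λ × X | dist (h q) (h (l₀, q.2)) < ε} := by
      simp [hε]
    exact (hopen.eventually_mem hmem).mono fun q hq => hq
  obtain ⟨Ω₂, hsub, hopen, hmem⟩ := mem_nhds_iff.1 hev
  exact ⟨Ω₂, hopen, hmem, fun l hl x => (hsub hl x (mem_univ x)).le⟩

/-- The key continuity lemma: the induced map between attractor étalé spaces is
continuous. -/
lemma etale_continuous {Λ X Y : Type*} [TopologicalSpace Λ]
    [MetricSpace X] [CompactSpace X] [MetricSpace Y] [CompactSpace Y]
    (φ : ℝ≥0 × X × Λ → X) (ψ : ℝ≥0 × Y × Λ → Y) (hψ : IsParamDS ψ)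
    (h : Λ × X → Y) (hhc : Continuous h)
    (hhomeo : ∀ l : Λ, IsHomeomorph fun x => h (l, x))
    (htrans : ∀ (l : Λ) (U : Set X), (fun x => h (l, x)) '' omegaLim (sliceDS φ l) U
      = omegaLim (sliceDS ψ l) ((fun x => h (l, x)) '' U))
    (H : AttEtale φ → AttEtale ψ)
    (hH : ∀ p, (H p).1 = (p.1.1, (fun x => h (p.1.1, x)) '' p.1.2)) :
    Continuous[attEtaleTop φ, attEtaleTop ψ] H := by
  choose e he using fun l => isHomeomorph_iff_exists_homeomorph.1 (hhomeo l)
  refine (continuous_generateFrom_iff (t := attEtaleTop φ)).2 ?_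
  rintro V ⟨U, Ω, hΩo, hΩsub, rfl⟩
  show IsOpen[attEtaleTop φ] _
  rw [attEtaleTop]
  apply isOpen_generateFrom_of_forall
  intro p₀ hp₀
  simp only [mem_preimage, mem_setOf_eq, hH p₀] at hp₀
  obtain ⟨hp₀1, hp₀2⟩ := hp₀
  set l₀ := p₀.1.1 with hl₀def
  set A := p₀.1.2 with hAdef
  have hUatt : omegaLim (sliceDS ψ l₀) U ⊆ interior U := hΩsub hp₀1
  obtain ⟨Ω₁, ε, hΩ₁o, hl₀Ω₁, hεpos, hpers⟩ := persist hψ l₀ U hUatt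
  obtain ⟨Ω₂, hΩ₂o, hl₀Ω₂, hΩ₂⟩ := h_uniform_close hhc l₀ hεpos
  set W : Set X := (e l₀).symm '' U with hWdef
  set Ω' : Set Λ := Ω ∩ Ω₁ ∩ Ω₂ with hΩ'def
  have hΩ'o : IsOpen Ω' := ((hΩo.inter hΩ₁o).inter hΩ₂o)
  have hl₀Ω' : l₀ ∈ Ω' := ⟨⟨hp₀1, hl₀Ω₁⟩, hl₀Ω₂⟩
  -- the perturbed homeomorphisms
  set g : Λ → Y → Y := fun l => (fun x => h (l, x)) ∘ ⇑(e l₀).symm with hgdef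
  have hgW : ∀ l : Λ, (fun x => h (l, x)) '' W = g l '' U := by
    intro l
    rw [hWdef, image_image]
    rfl
  have hghomeo : ∀ l, IsHomeomorph (g l) := by
    intro l
    have : g l = ⇑((e l₀).symm.trans (e l)) := by
      funext y
      simp only [hgdef, Function.comp_apply, Homeomorph.trans_apply]
      exact (congrFun (he l) _).symm
    rw [this]
    exact ((e l₀).symm.trans (e l)).isHomeomorph
  have hgdist : ∀ l ∈ Ω₂, ∀ y, dist (g l y) y ≤ ε := by
    intro l hl y
    have h1 : h (l₀, (e l₀).symm y) = y := by
      have h0 : (e l₀) ((e l₀).symm y) = h (l₀, (e l₀).symm y) := congrFun (he l₀) _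
      rw [← h0, Homeomorph.apply_symm_apply]
    have h3 := hΩ₂ l hl ((e l₀).symm y)
    rw [h1] at h3
    exact h3
  -- transport of omega limits through (e l)
  have htrans' : ∀ (l : Λ) (S : Set X), (e l) '' omegaLim (sliceDS φ l) S
      = omegaLim (sliceDS ψ l) ((e l) '' S) := by
    intro l S
    rw [he l]
    exact htrans l S
  have hsymm_img : ∀ (l : Λ) (S : Set X), (e l).symm '' ((e l) '' S) = S :=
    fun l S => (e l).toEquiv.symm_image_image S
  have hback : ∀ (l : Λ) (S : Set X),
      omegaLim (sliceDS φ l) S = (e l).symm '' omegaLim (sliceDS ψ l) ((e l) '' S) := by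
    intro l S
    rw [← htrans' l S]
    exact (hsymm_img l _).symm
  have heW : ∀ l, (e l) '' W = g l '' U := by
    intro l
    rw [← hgW l, ← he l]
  -- the basic neighborhood
  refine ⟨{p : AttEtale φ | p.1.1 ∈ Ω' ∧ p.1.2 = omegaLim (sliceDS φ p.1.1) W},
    ⟨W, Ω', hΩ'o, ?_, rfl⟩, ⟨hl₀Ω', ?_⟩, ?_⟩
  · -- Ω' ⊆ {l | W ∈ attNbhd φ l}
    intro l hl
    obtain ⟨⟨hlΩ, hlΩ₁⟩, hlΩ₂⟩ := hl
    obtain ⟨heq, hsub, _⟩ := hpers l hlΩ₁ (g l) (hghomeo l) (hgdist l hlΩ₂)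
    show omegaLim (sliceDS φ l) W ⊆ interior W
    rw [hback l W, heW l]
    have h2 : (e l).symm '' omegaLim (sliceDS ψ l) (g l '' U)
        ⊆ (e l).symm '' interior (g l '' U) := image_mono hsub
    refine h2.trans ?_
    rw [Homeomorph.image_interior]
    apply interior_mono
    rw [← heW l, hsymm_img l W]
  · -- p₀ belongs
    obtain ⟨heq, _, _⟩ := hpers l₀ hl₀Ω₁ (g l₀) (hghomeo l₀) (hgdist l₀ hl₀Ω₂)
    have h1 : (e l₀) '' A = omegaLim (sliceDS ψ l₀) U := by
      rw [← hp₀2, he l₀]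
    have h2 : (e l₀) '' omegaLim (sliceDS φ l₀) W = omegaLim (sliceDS ψ l₀) U := by
      rw [htrans' l₀ W, heW l₀, heq]
    have := h1.trans h2.symm
    exact (e l₀).injective.image_injective this
  · -- inclusion in the preimage
    intro p hp
    obtain ⟨hpΩ', hpeq⟩ := hp
    obtain ⟨⟨hpΩ, hpΩ₁⟩, hpΩ₂⟩ := hpΩ'
    obtain ⟨heq, _, _⟩ := hpers p.1.1 hpΩ₁ (g p.1.1) (hghomeo p.1.1) (hgdist p.1.1 hpΩ₂)
    simp only [mem_preimage, mem_setOf_eq, hH p]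
    refine ⟨hpΩ, ?_⟩
    rw [hpeq, htrans p.1.1 W]
    have : (fun x => h (p.1.1, x)) '' W = g p.1.1 '' U := hgW p.1.1
    rw [this, heq]

/-- Conjugacy Invariance Theorem: if `φ` and `ψ` are conjugate parametrized dynamical
systems over `Λ` on compact metric spaces `X`, `Y` — via a continuous `h : Λ × X → Y`
such that each `h^λ` is a homeomorphism conjugating `φ^λ` to `ψ^λ` (with continuous time
reparametrization), and `h^λ` maps each connected component of `X` onto a fixed connected
component of `Y` uniformly in `λ` — then the attractor étalé spaces of `φ` and `ψ` over `Λ`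
are homeomorphic via `(λ, A) ↦ (λ, h^λ(A))`. -/
theorem stmt18 {Λ X Y : Type*} [TopologicalSpace Λ]
    [MetricSpace X] [CompactSpace X] [MetricSpace Y] [CompactSpace Y]
    (φ : ℝ≥0 × X × Λ → X) (ψ : ℝ≥0 × Y × Λ → Y)
    (hφ : IsParamDS φ) (hψ : IsParamDS ψ)
    (h : Λ × X → Y) (hhc : Continuous h)
    (hhomeo : ∀ l : Λ, IsHomeomorph fun x => h (l, x))
    (hconj : ∀ l : Λ, ∃ τ : ℝ≥0 × X → ℝ≥0, Continuous τ ∧ (∀ x, τ (0, x) = 0) ∧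
      (∀ x, StrictMono fun t => τ (t, x)) ∧
      (∀ x, Function.Surjective fun t => τ (t, x)) ∧
      ∀ t x, h (l, sliceDS φ l (t, x)) = sliceDS ψ l (τ (t, x), h (l, x)))
    (hcomp : ∀ x : X, ∃ y : Y, ∀ l : Λ,
      (fun x' => h (l, x')) '' connectedComponent x = connectedComponent y) :
    letI : TopologicalSpace (AttEtale φ) := attEtaleTop φ
    letI : TopologicalSpace (AttEtale ψ) := attEtaleTop ψ
    ∃ H : AttEtale φ → AttEtale ψ, IsHomeomorph H ∧
      ∀ p : AttEtale φ, (H p).1 = (p.1.1, (fun x => h (p.1.1, x)) '' p.1.2) := by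
  choose e he using fun l => isHomeomorph_iff_exists_homeomorph.1 (hhomeo l)
  choose τ hτc hτ0 hτm hτs hτe using hconj
  -- transport of omega limits
  have htrans : ∀ (l : Λ) (U : Set X), (fun x => h (l, x)) '' omegaLim (sliceDS φ l) U
      = omegaLim (sliceDS ψ l) ((fun x => h (l, x)) '' U) := by
    intro l U
    exact omega_transport (hhomeo l) (hτc l) (hτm l) (hτs l) (fun t x => hτe l t x) U
  -- the inverse conjugacy
  set h' : Λ × Y → X := fun q => (e q.1).symm q.2 with hh'def
  have hhe : ∀ l x, h (l, x) = (e l) x := fun l x => (congrFun (he l) x).symm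
  have hh'h : ∀ l x, h' (l, h (l, x)) = x := by
    intro l x
    rw [hhe, hh'def]
    exact (e l).symm_apply_apply x
  have hhh' : ∀ l y, h (l, h' (l, y)) = y := by
    intro l y
    rw [hhe, hh'def]
    exact (e l).apply_symm_apply y
  -- continuity of the inverse conjugacy via a closed-map argument
  have hh'c : Continuous h' := by
    set Gi : Λ × Y → Λ × X := fun q => (q.1, h' q) with hGidef
    have hGi : Continuous Gi := by
      rw [continuous_iff_isClosed]
      intro F hF
      have hset : Gi ⁻¹' F =
          Prod.fst '' {qx : (Λ × Y) × X | (qx.1.1, qx.2) ∈ F ∧ h (qx.1.1, qx.2) = qx.1.2} := by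
        apply subset_antisymm
        · intro q hq
          exact ⟨(q, h' q), ⟨hq, hhh' q.1 q.2⟩, rfl⟩
        · rintro q ⟨⟨q', x⟩, ⟨hmem, heq⟩, rfl⟩
          have : h' (q'.1, q'.2) = x := by
            rw [← heq, hh'h]
          simpa [hGidef, Gi, this] using hmem
      rw [hset]
      apply isClosedMap_fst_of_compactSpace
      apply IsClosed.inter
      · exact hF.preimage ((continuous_fst.comp continuous_fst).prodMk continuous_snd)
      · exact isClosed_eq
          (hhc.comp ((continuous_fst.comp continuous_fst).prodMk continuous_snd))
          (continuous_snd.comp continuous_fst)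
    exact continuous_snd.comp hGi
  have hh'homeo : ∀ l : Λ, IsHomeomorph fun y => h' (l, y) := by
    intro l
    have : (fun y => h' (l, y)) = ⇑(e l).symm := rfl
    rw [this]
    exact (e l).symm.isHomeomorph
  -- reverse transport
  have htrans' : ∀ (l : Λ) (V : Set Y), (fun y => h' (l, y)) '' omegaLim (sliceDS ψ l) V
      = omegaLim (sliceDS φ l) ((fun y => h' (l, y)) '' V) := by
    intro l V
    have h1 := htrans l ((fun y => h' (l, y)) '' V)
    have h2 : (fun x => h (l, x)) '' ((fun y => h' (l, y)) '' V) = V := by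
      rw [image_image]
      simp only [hhh', image_id']
    rw [h2] at h1
    rw [← h1, image_image]
    simp only [hh'h, image_id']
  -- transport of attracting neighborhoods
  have hatt : ∀ (l : Λ) (U : Set X), U ∈ attNbhd φ l →
      ((fun x => h (l, x)) '' U) ∈ attNbhd ψ l := by
    intro l U hU
    show omegaLim (sliceDS ψ l) ((fun x => h (l, x)) '' U) ⊆ interior ((fun x => h (l, x)) '' U)
    rw [← htrans l U]
    exact (image_mono hU).trans ((hhomeo l).isOpenMap.image_interior_subset U)
  have hatt' : ∀ (l : Λ) (V : Set Y), V ∈ attNbhd ψ l →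
      ((fun y => h' (l, y)) '' V) ∈ attNbhd φ l := by
    intro l V hV
    show omegaLim (sliceDS φ l) ((fun y => h' (l, y)) '' V)
      ⊆ interior ((fun y => h' (l, y)) '' V)
    rw [← htrans' l V]
    exact (image_mono hV).trans ((hh'homeo l).isOpenMap.image_interior_subset V)
  -- the forward and backward maps
  set H : AttEtale φ → AttEtale ψ := fun p =>
    ⟨(p.1.1, (fun x => h (p.1.1, x)) '' p.1.2), by
      obtain ⟨U, hUatt, hUeq⟩ := p.2
      have hUeq' : omegaLim (sliceDS φ p.1.1) U = p.1.2 := hUeq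
      exact ⟨(fun x => h (p.1.1, x)) '' U, hatt p.1.1 U hUatt, by
        simp only
        rw [← htrans p.1.1 U, hUeq']⟩⟩ with hHdef
  set H' : AttEtale ψ → AttEtale φ := fun p =>
    ⟨(p.1.1, (fun y => h' (p.1.1, y)) '' p.1.2), by
      obtain ⟨V, hVatt, hVeq⟩ := p.2
      have hVeq' : omegaLim (sliceDS ψ p.1.1) V = p.1.2 := hVeq
      exact ⟨(fun y => h' (p.1.1, y)) '' V, hatt' p.1.1 V hVatt, by
        simp only
        rw [← htrans' p.1.1 V, hVeq']⟩⟩ with hH'def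
  have hHfst : ∀ p : AttEtale φ, (H p).1 = (p.1.1, (fun x => h (p.1.1, x)) '' p.1.2) :=
    fun p => rfl
  have hH'fst : ∀ p : AttEtale ψ, (H' p).1 = (p.1.1, (fun y => h' (p.1.1, y)) '' p.1.2) :=
    fun p => rfl
  have hleft : Function.LeftInverse H' H := by
    intro p
    apply Subtype.ext
    apply Prod.ext
    · rfl
    · show (fun y => h' (p.1.1, y)) '' ((fun x => h (p.1.1, x)) '' p.1.2) = p.1.2
      rw [image_image]
      simp only [hh'h]
      exact image_id _
  have hright : Function.RightInverse H' H := by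
    intro p
    apply Subtype.ext
    apply Prod.ext
    · rfl
    · show (fun x => h (p.1.1, x)) '' ((fun y => h' (p.1.1, y)) '' p.1.2) = p.1.2
      rw [image_image]
      simp only [hhh']
      exact image_id _
  have hHc : Continuous[attEtaleTop φ, attEtaleTop ψ] H :=
    etale_continuous φ ψ hψ h hhc hhomeo htrans H hHfst
  have hH'c : Continuous[attEtaleTop ψ, attEtaleTop φ] H' :=
    etale_continuous ψ φ hφ h' hh'c hh'homeo htrans' H' hH'fst
  letI : TopologicalSpace (AttEtale φ) := attEtaleTop φ
  letI : TopologicalSpace (AttEtale ψ) := attEtaleTop ψ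
  refine ⟨H, ?_, hHfst⟩
  exact isHomeomorph_iff_exists_inverse.2 ⟨hHc, H', hleft, hright, hH'c⟩
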